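/- arXiv:math/0112261 — 2 statements merged into one kernel-verified Lean document; each statement's English description precedes it below -/
import Mathlib

section
/- Applying the modified jeu de taquin ordering procedure to any shifted tabloid T of shape λ (performing jeu de taquin with the entries of the cells in the rowwise order, from the rightmost cell of the bottom row up to cell (1,1)) produces a shifted standard tableau of shape λ. -/
/-- The cells of the shifted Ferrers diagram of the strict partition
`lam` with `r` rows: pairs `(i,j)` with `1 ≤ i ≤ r` and `i ≤ j ≤ lam i + i - 1`. -/
def shCells (lam : ℕ → ℕ) (r : ℕ) : Finset (ℕ × ℕ) :=
  ((Finset.Icc 1 r) ×ˢ (Finset.Icc 1 ((Finset.Icc 1 r).sup (fun i => lam i + i)))).filter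
    (fun p => p.1 ≤ p.2 ∧ p.2 + 1 ≤ lam p.1 + p.1)

/-- The shifted hook of a cell `c = (i,j)`: the cell itself, the cells to its right in
row `i`, the cells below it in column `j`, and, if the diagonal cell `(j,j)` belongs to
this set, additionally all cells of row `j+1`. -/
def shHook (lam : ℕ → ℕ) (r : ℕ) (c : ℕ × ℕ) : Finset (ℕ × ℕ) :=
  (shCells lam r).filter (fun p =>
    p = c ∨ (p.1 = c.1 ∧ c.2 < p.2) ∨ (p.2 = c.2 ∧ c.1 < p.1) ∨
      (c.1 ≤ c.2 ∧ (c.2, c.2) ∈ shCells lam r ∧ p.1 = c.2 + 1))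

/-- The shifted hook length of a cell. -/
def shHookLen (lam : ℕ → ℕ) (r : ℕ) (c : ℕ × ℕ) : ℕ := (shHook lam r c).card

/-- `lam` is a strict partition of `n` with `r` (positive, strictly decreasing) parts. -/
def IsStrictPartition (lam : ℕ → ℕ) (r n : ℕ) : Prop :=
  0 < r ∧ (∀ i, 1 ≤ i → i ≤ r → 0 < lam i) ∧
    (∀ i j, 1 ≤ i → i < j → j ≤ r → lam j < lam i) ∧
    (∑ i ∈ Finset.Icc 1 r, lam i) = n

/-- A shifted tabloid: a bijective filling of the shifted Ferrers diagram with `1,…,n`. -/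
def IsShTabloid (lam : ℕ → ℕ) (r n : ℕ) (T : ℕ × ℕ → ℕ) : Prop :=
  Set.BijOn T (↑(shCells lam r)) (↑(Finset.Icc 1 n))

/-- Entries increase along rows and columns. -/
def IsIncreasing (lam : ℕ → ℕ) (r : ℕ) (T : ℕ × ℕ → ℕ) : Prop :=
  ∀ p ∈ shCells lam r, ∀ q ∈ shCells lam r,
    ((q.1 = p.1 ∧ q.2 = p.2 + 1) ∨ (q.1 = p.1 + 1 ∧ q.2 = p.2)) → T p < T q

/-- The rowwise order on cells: `a` precedes `b` iff `a` is in a lower row, or in the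
same row strictly to the right. -/
def rowLT (a b : ℕ × ℕ) : Prop := b.1 < a.1 ∨ (a.1 = b.1 ∧ b.2 < a.2)

/-- `IsJdtResult lam r D T c₀ U` holds if `U` can be obtained from `T` by performing
jeu de taquin with the entry in cell `c₀`, with respect to the set of cells `D`:
there is a finite run of swap steps, each moving the entry one cell to the right or
downwards (always exchanging it with the smaller of its right and lower neighbours,
missing cells counting as `+∞`), stopping as soon as the entry is stable or lies in
a cell of `D`. -/
def IsJdtResult (lam : ℕ → ℕ) (r : ℕ) (D : Finset (ℕ × ℕ)) (T : ℕ × ℕ → ℕ)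
    (c₀ : ℕ × ℕ) (U : ℕ × ℕ → ℕ) : Prop :=
  ∃ (m : ℕ) (path : ℕ → ℕ × ℕ) (tab : ℕ → ℕ × ℕ → ℕ),
    path 0 = c₀ ∧ tab 0 = T ∧ tab m = U ∧
    (∀ k, k < m →
      path k ∉ D ∧
      (path (k + 1) = ((path k).1 + 1, (path k).2) ∨
        path (k + 1) = ((path k).1, (path k).2 + 1)) ∧
      path (k + 1) ∈ shCells lam r ∧
      tab k (path (k + 1)) < tab k (path k) ∧
      (∀ σ ∈ shCells lam r,
        (σ = ((path k).1 + 1, (path k).2) ∨ σ = ((path k).1, (path k).2 + 1)) →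
          tab k (path (k + 1)) ≤ tab k σ) ∧
      tab (k + 1) = fun c =>
        if c = path k then tab k (path (k + 1))
        else if c = path (k + 1) then tab k (path k) else tab k c) ∧
    (path m ∈ D ∨
      ∀ σ ∈ shCells lam r,
        (σ = ((path m).1 + 1, (path m).2) ∨ σ = ((path m).1, (path m).2 + 1)) →
          tab m (path m) ≤ tab m σ)

section Aux

/-- Adjacency: `q` is the right or lower neighbour of `p`. -/
def adjC (p q : ℕ × ℕ) : Prop :=
  (q.1 = p.1 ∧ q.2 = p.2 + 1) ∨ (q.1 = p.1 + 1 ∧ q.2 = p.2)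

/-- `d` is weakly after `c` in the rowwise order. -/
def InReg (c d : ℕ × ℕ) : Prop := c.1 < d.1 ∨ (d.1 = c.1 ∧ c.2 ≤ d.2)

lemma adjC_iff (p q : ℕ × ℕ) :
    adjC p q ↔ (q = (p.1 + 1, p.2) ∨ q = (p.1, p.2 + 1)) := by
  simp only [adjC, Prod.ext_iff]
  omega

lemma adjC_sum {p q : ℕ × ℕ} (h : adjC p q) : q.1 + q.2 = p.1 + p.2 + 1 := by
  rcases h with ⟨h1, h2⟩ | ⟨h1, h2⟩ <;> omega

lemma adjC_ne {p q : ℕ × ℕ} (h : adjC p q) : p ≠ q := by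
  have := adjC_sum h
  intro he
  subst he
  omega

lemma InReg_adj {c d d' : ℕ × ℕ} (h : InReg c d) (ha : adjC d d') : InReg c d' := by
  simp only [InReg, adjC] at *
  omega

lemma InReg_self (c : ℕ × ℕ) : InReg c c := Or.inr ⟨rfl, le_rfl⟩

lemma rowLT_iff (p c : ℕ × ℕ) : rowLT p c ↔ InReg c p ∧ p ≠ c := by
  simp only [rowLT, InReg, ne_eq, Prod.ext_iff]
  omega

lemma rowLT_asymm {a b : ℕ × ℕ} (h1 : rowLT a b) (h2 : rowLT b a) : False := by
  simp only [rowLT] at h1 h2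
  omega

lemma bijOn_swap {T : ℕ × ℕ → ℕ} {s : Set (ℕ × ℕ)} {t : Set ℕ}
    (hT : Set.BijOn T s t) {a b : ℕ × ℕ} (ha : a ∈ s) (hb : b ∈ s) :
    Set.BijOn (fun c => if c = a then T b else if c = b then T a else T c) s t := by
  have heq : (fun c => if c = a then T b else if c = b then T a else T c)
      = T ∘ (Equiv.swap a b) := by
    funext x
    by_cases h1 : x = a
    · subst h1; simp
    · by_cases h2 : x = b
      · subst h2; simp [h1]
      · simp [h1, h2, Equiv.swap_apply_of_ne_of_ne h1 h2]
  have hmaps : Set.MapsTo (Equiv.swap a b) s s := by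
    intro x hx
    by_cases h1 : x = a
    · subst h1; simpa using hb
    · by_cases h2 : x = b
      · subst h2; simpa using ha
      · simpa [Equiv.swap_apply_of_ne_of_ne h1 h2] using hx
  have hswap : Set.BijOn (Equiv.swap a b) s s :=
    ⟨hmaps, (Equiv.injective _).injOn, fun x hx => ⟨Equiv.swap a b x, hmaps hx, by simp⟩⟩
  rw [heq]
  exact hT.comp hswap

/-- The key lemma: a single jeu de taquin slide starting at cell `c` turns a tabloid
that is increasing on the region strictly after `c` (in the rowwise order) into a
tabloid that is increasing on the region weakly after `c`. -/
lemma slide_lemma (lam : ℕ → ℕ) (r n : ℕ) (T U : ℕ × ℕ → ℕ)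
    (hT : IsShTabloid lam r n T) (c : ℕ × ℕ) (hc : c ∈ shCells lam r)
    (hinc : ∀ p ∈ shCells lam r, ∀ q ∈ shCells lam r,
      InReg c p → p ≠ c → InReg c q → q ≠ c → adjC p q → T p < T q)
    (hjdt : IsJdtResult lam r ∅ T c U) :
    IsShTabloid lam r n U ∧
      ∀ p ∈ shCells lam r, ∀ q ∈ shCells lam r,
        InReg c p → InReg c q → adjC p q → U p < U q := by
  obtain ⟨m, path, tab, hp0, ht0, htm, hstep, hterm⟩ := hjdt
  have H : ∀ k, k ≤ m → IsShTabloid lam r n (tab k) ∧ path k ∈ shCells lam r ∧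
      InReg c (path k) ∧
      (∀ p ∈ shCells lam r, ∀ q ∈ shCells lam r, InReg c p → InReg c q →
        p ≠ path k → q ≠ path k → adjC p q → tab k p < tab k q) ∧
      (∀ x ∈ shCells lam r, InReg c x → adjC x (path k) →
        ∀ q ∈ shCells lam r, adjC (path k) q → tab k x < tab k q) ∧
      (∀ x ∈ shCells lam r, InReg c x → adjC x (path k) → tab k x < tab k (path k)) := by
    intro k
    induction k with
    | zero =>
      intro _
      refine ⟨by rw [ht0]; exact hT, by rw [hp0]; exact hc,
        by rw [hp0]; exact InReg_self c, ?_, ?_, ?_⟩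
      · intro p hp q hq hrp hrq hpne hqne hadj
        rw [ht0]
        exact hinc p hp q hq hrp (by rwa [hp0] at hpne) hrq (by rwa [hp0] at hqne) hadj
      · intro x hx hrx hadjx q hq hadjq
        exfalso
        rw [hp0] at hadjx
        simp only [InReg, adjC] at hrx hadjx
        omega
      · intro x hx hrx hadjx
        exfalso
        rw [hp0] at hadjx
        simp only [InReg, adjC] at hrx hadjx
        omega
    | succ k ih =>
      intro hk
      obtain ⟨ih1, ih2, ih3, ih4, ih5, ih6⟩ := ih (by omega)
      obtain ⟨-, hmove, hcell, hlt, hmin, hupd⟩ := hstep k (by omega)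
      have hadj : adjC (path k) (path (k + 1)) := (adjC_iff _ _).mpr hmove
      have hne : path k ≠ path (k + 1) := adjC_ne hadj
      have hval : ∀ p, p ≠ path k → p ≠ path (k + 1) → tab (k + 1) p = tab k p := by
        intro p h1 h2
        rw [hupd]
        simp [h1, h2]
      have hvalh : tab (k + 1) (path k) = tab k (path (k + 1)) := by
        rw [hupd]; simp
      have hvalh' : tab (k + 1) (path (k + 1)) = tab k (path k) := by
        rw [hupd]
        simp [hne.symm]
      have hinj := ih1.injOn
      have hreg' : InReg c (path (k + 1)) := InReg_adj ih3 hadj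
      refine ⟨?_, hcell, hreg', ?_, ?_, ?_⟩
      · rw [hupd]
        exact bijOn_swap ih1 (Finset.mem_coe.mpr ih2) (Finset.mem_coe.mpr hcell)
      · intro p hp q hq hrp hrq hpne hqne hadj2
        by_cases hpk : p = path k
        · subst hpk
          have hq1 : q ≠ path k := (adjC_ne hadj2).symm
          rw [hvalh, hval q hq1 hqne]
          have hle : tab k (path (k + 1)) ≤ tab k q :=
            hmin q hq ((adjC_iff (path k) q).mp hadj2)
          exact lt_of_le_of_ne hle fun h =>
            hqne ((hinj (Finset.mem_coe.mpr hcell) (Finset.mem_coe.mpr hq) h).symm)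
        · by_cases hqk : q = path k
          · subst hqk
            rw [hval p hpk hpne, hvalh]
            exact ih5 p hp hrp hadj2 (path (k + 1)) hcell hadj
          · rw [hval p hpk hpne, hval q hqk hqne]
            exact ih4 p hp q hq hrp hrq hpk hqk hadj2
      · intro x hx hrx hadjx q' hq' hadjq'
        have s1 := adjC_sum hadj
        have s2 := adjC_sum hadjq'
        have hq'1 : q' ≠ path k := by
          intro he
          rw [he] at s2
          omega
        have hq'2 : q' ≠ path (k + 1) := (adjC_ne hadjq').symm
        have hrq' : InReg c q' := InReg_adj hreg' hadjq'
        rw [hval q' hq'1 hq'2]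
        have hmain : tab k (path (k + 1)) < tab k q' :=
          ih4 (path (k + 1)) hcell q' hq' hreg' hrq' hne.symm hq'1 hadjq'
        by_cases hxk : x = path k
        · subst hxk
          rw [hvalh]
          exact hmain
        · have hx2 : x ≠ path (k + 1) := adjC_ne hadjx
          rw [hval x hxk hx2]
          exact lt_trans (ih4 x hx (path (k + 1)) hcell hrx hreg' hxk hne.symm hadjx) hmain
      · intro x hx hrx hadjx
        rw [hvalh']
        by_cases hxk : x = path k
        · subst hxk
          rw [hvalh]
          exact hlt
        · rw [hval x hxk (adjC_ne hadjx)]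
          exact lt_trans (ih4 x hx (path (k + 1)) hcell hrx hreg' hxk hne.symm hadjx) hlt
  obtain ⟨h1, h2, h3, h4, h5, h6⟩ := H m le_rfl
  have hstab : ∀ σ ∈ shCells lam r,
      (σ = ((path m).1 + 1, (path m).2) ∨ σ = ((path m).1, (path m).2 + 1)) →
        tab m (path m) ≤ tab m σ := by
    rcases hterm with h | h
    · exact absurd h (by simp)
    · exact h
  constructor
  · rw [← htm]
    exact h1
  · intro p hp q hq hrp hrq hadjpq
    rw [← htm]
    by_cases hpm : p = path m
    · subst hpm
      have hq1 : q ≠ path m := (adjC_ne hadjpq).symm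
      have hle := hstab q hq ((adjC_iff (path m) q).mp hadjpq)
      exact lt_of_le_of_ne hle fun h =>
        hq1 ((h1.injOn (Finset.mem_coe.mpr hp) (Finset.mem_coe.mpr hq) h).symm)
    · by_cases hqm : q = path m
      · subst hqm
        exact h6 p hp hrp hadjpq
      · exact h4 p hp q hq hrp hrq hpm hqm hadjpq

end Aux

/-- applying jeu de taquin to the entries of the cells in the rowwise
order (from the rightmost cell of the bottom row up to `(1,1)`) turns any shifted
tabloid into a shifted standard tableau. -/
theorem ordering_procedure_standard (n r : ℕ) (lam : ℕ → ℕ)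
    (hlam : IsStrictPartition lam r n)
    (T : ℕ × ℕ → ℕ) (hT : IsShTabloid lam r n T)
    (L : List (ℕ × ℕ)) (hnd : L.Nodup)
    (hmem : ∀ c : ℕ × ℕ, c ∈ L ↔ c ∈ shCells lam r)
    (hsort : L.Pairwise rowLT)
    (tab : ℕ → ℕ × ℕ → ℕ) (h0 : tab 0 = T)
    (hstep : ∀ k, k < L.length →
      IsJdtResult lam r ∅ (tab k) (L.getD k (0, 0)) (tab (k + 1))) :
    IsShTabloid lam r n (tab L.length) ∧ IsIncreasing lam r (tab L.length) := by
  have hpair : ∀ i j (hi : i < L.length) (hj : j < L.length), i < j →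
      rowLT (L.get ⟨i, hi⟩) (L.get ⟨j, hj⟩) := by
    intro i j hi hj hij
    exact List.pairwise_iff_get.mp hsort ⟨i, hi⟩ ⟨j, hj⟩ hij
  have Out : ∀ k, k ≤ L.length → IsShTabloid lam r n (tab k) ∧
      ∀ p ∈ shCells lam r, ∀ q ∈ shCells lam r,
        (∃ i, ∃ hi : i < L.length, i < k ∧ L.get ⟨i, hi⟩ = p) →
        (∃ i, ∃ hi : i < L.length, i < k ∧ L.get ⟨i, hi⟩ = q) →
        adjC p q → tab k p < tab k q := by
    intro k
    induction k with
    | zero =>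
      intro _
      refine ⟨by rw [h0]; exact hT, ?_⟩
      rintro p hp q hq ⟨i, hi, hik, -⟩ -
      omega
    | succ k ihk =>
      intro hk
      have hk' : k < L.length := by omega
      obtain ⟨ih1, ih2⟩ := ihk (by omega)
      set c := L.get ⟨k, hk'⟩ with hcdef
      have hc : c ∈ shCells lam r := (hmem c).mp (List.get_mem L _)
      have hQ : ∀ p, (∃ i, ∃ hi : i < L.length, i < k ∧ L.get ⟨i, hi⟩ = p) ↔
          (p ∈ shCells lam r ∧ InReg c p ∧ p ≠ c) := by
        intro p
        constructor
        · rintro ⟨i, hi, hik, rfl⟩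
          refine ⟨(hmem _).mp (List.get_mem L _), ?_⟩
          rw [← rowLT_iff]
          exact hpair i k hi hk' hik
        · rintro ⟨hpcell, hrp, hpne⟩
          have hpL : p ∈ L := (hmem p).mpr hpcell
          obtain ⟨⟨i, hi⟩, rfl⟩ := List.mem_iff_get.mp hpL
          refine ⟨i, hi, ?_, rfl⟩
          rcases lt_trichotomy i k with h | h | h
          · exact h
          · exfalso
            subst h
            exact hpne rfl
          · exfalso
            exact rowLT_asymm ((rowLT_iff _ _).mpr ⟨hrp, hpne⟩) (hpair k i hk' hi h)
      have hjdt : IsJdtResult lam r ∅ (tab k) c (tab (k + 1)) := by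
        have hgd : L.getD k (0, 0) = c := by
          rw [hcdef, List.getD_eq_getElem?_getD, List.getElem?_eq_getElem hk']
          rfl
        have := hstep k hk'
        rwa [hgd] at this
      have hinc : ∀ p ∈ shCells lam r, ∀ q ∈ shCells lam r,
          InReg c p → p ≠ c → InReg c q → q ≠ c → adjC p q → tab k p < tab k q :=
        fun p hp q hq hrp hpne hrq hqne hadj2 =>
          ih2 p hp q hq ((hQ p).mpr ⟨hp, hrp, hpne⟩) ((hQ q).mpr ⟨hq, hrq, hqne⟩) hadj2
      obtain ⟨new1, new2⟩ := slide_lemma lam r n (tab k) (tab (k + 1)) ih1 c hc hinc hjdt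
      refine ⟨new1, ?_⟩
      intro p hp q hq hip hiq hadj2
      have hgen : ∀ x, (∃ i, ∃ hi : i < L.length, i < k + 1 ∧ L.get ⟨i, hi⟩ = x) →
          x ∈ shCells lam r → InReg c x := by
        intro x hex hxcell
        obtain ⟨i, hi, hik, rfl⟩ := hex
        rcases Nat.lt_or_ge i k with h | h
        · exact ((hQ _).mp ⟨i, hi, h, rfl⟩).2.1
        · have hik' : i = k := by omega
          subst hik'
          exact InReg_self c
      exact new2 p hp q hq (hgen p hip hp) (hgen q hiq hq) hadj2
  obtain ⟨f1, f2⟩ := Out L.length le_rfl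
  refine ⟨f1, ?_⟩
  intro p hp q hq hadj2
  have hex : ∀ x, x ∈ shCells lam r →
      ∃ i, ∃ hi : i < L.length, i < L.length ∧ L.get ⟨i, hi⟩ = x := by
    intro x hx
    obtain ⟨⟨i, hi⟩, rfl⟩ := List.mem_iff_get.mp ((hmem x).mpr hx)
    exact ⟨i, hi, hi, rfl⟩
  exact f2 p hp q hq (hex p hp) (hex q hq) hadj2
end

section
/- If a shifted tabloid T is ordered up to the cell preceding (i,j) in the rowwise order, e = T_{i,j}, and U is the result of performing jeu de taquin in T with e (with respect to the empty set), then U is ordered up to (i,j), and performing reverse jeu de taquin in U with e and with respect to the cell (i,j) (with fixed row i) recovers T. -/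
/-- `IsRjtResult lam r i D U c₀ T` holds if `T` can be obtained from `U` by performing
reverse jeu de taquin (with fixed row `i`) with the entry in cell `c₀`, with respect
to the set of cells `D`: while the current cell `(i',j')` of the entry is neither
`(i,i)` nor in `D`, the entry is swapped with its left neighbour if `i' = i`, with its
upper neighbour if `i' = j'`, and otherwise with the larger of its upper and left
neighbours. -/
def IsRjtResult (lam : ℕ → ℕ) (r i : ℕ) (D : Finset (ℕ × ℕ)) (U : ℕ × ℕ → ℕ)
    (c₀ : ℕ × ℕ) (T : ℕ × ℕ → ℕ) : Prop :=
  ∃ (m : ℕ) (path : ℕ → ℕ × ℕ) (tab : ℕ → ℕ × ℕ → ℕ),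
    path 0 = c₀ ∧ tab 0 = U ∧ tab m = T ∧
    (∀ k, k < m →
      path k ≠ (i, i) ∧ path k ∉ D ∧
      ((path k).1 = i → path (k + 1) = ((path k).1, (path k).2 - 1)) ∧
      ((path k).1 ≠ i → (path k).1 = (path k).2 →
        path (k + 1) = ((path k).1 - 1, (path k).2)) ∧
      ((path k).1 ≠ i → (path k).1 ≠ (path k).2 →
        ((path (k + 1) = ((path k).1 - 1, (path k).2) ∨
            path (k + 1) = ((path k).1, (path k).2 - 1)) ∧
          (∀ σ ∈ shCells lam r,
            (σ = ((path k).1 - 1, (path k).2) ∨ σ = ((path k).1, (path k).2 - 1)) →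
              tab k σ ≤ tab k (path (k + 1))))) ∧
      path (k + 1) ∈ shCells lam r ∧
      tab (k + 1) = fun c =>
        if c = path k then tab k (path (k + 1))
        else if c = path (k + 1) then tab k (path k) else tab k c) ∧
    (path m = (i, i) ∨ path m ∈ D)

/-- if `T` is ordered up to the predecessor of `(i,j)` in the rowwise
order and `U` is obtained from `T` by jeu de taquin with the entry `e = T (i,j)`
(with respect to the empty set), then `U` is ordered up to `(i,j)`, and reverse jeu
de taquin in `U` with `e`, with respect to `{(i,j)}` and fixed row `i`, recovers `T`. -/
theorem jdt_rjt_inverse (n r : ℕ) (lam : ℕ → ℕ) (hlam : IsStrictPartition lam r n)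
    (T : ℕ × ℕ → ℕ) (hT : IsShTabloid lam r n T)
    (i j : ℕ) (hc : (i, j) ∈ shCells lam r)
    (hord : ∀ p ∈ shCells lam r, ∀ q ∈ shCells lam r,
      rowLT p (i, j) → rowLT q (i, j) →
      ((q.1 = p.1 ∧ q.2 = p.2 + 1) ∨ (q.1 = p.1 + 1 ∧ q.2 = p.2)) → T p < T q)
    (U : ℕ × ℕ → ℕ) (hU : IsJdtResult lam r ∅ T (i, j) U)
    (c' : ℕ × ℕ) (hc' : c' ∈ shCells lam r) (hval : U c' = T (i, j)) :
    (∀ p ∈ shCells lam r, ∀ q ∈ shCells lam r,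
      (p = (i, j) ∨ rowLT p (i, j)) → (q = (i, j) ∨ rowLT q (i, j)) →
      ((q.1 = p.1 ∧ q.2 = p.2 + 1) ∨ (q.1 = p.1 + 1 ∧ q.2 = p.2)) → U p < U q) ∧
    IsRjtResult lam r i {(i, j)} U c' T := by
  classical
  obtain ⟨m, path, tab, hp0, ht0, htm, hstep, hfin⟩ := hU
  have hinjT : Set.InjOn T ↑(shCells lam r) := hT.2.1
  have hinj2 : ∀ a ∈ shCells lam r, ∀ b ∈ shCells lam r, T a = T b → a = b :=
    fun a ha b hb h => hinjT (Finset.mem_coe.mpr ha) (Finset.mem_coe.mpr hb) h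
  have hcellP : ∀ c ∈ shCells lam r, 1 ≤ c.1 ∧ c.1 ≤ c.2 := by
    intro c hcm
    simp only [shCells, Finset.mem_filter, Finset.mem_product, Finset.mem_Icc] at hcm
    exact ⟨hcm.1.1.1, hcm.2.1⟩
  have hij : i ≤ j := (hcellP (i, j) hc).2
  have hsum : ∀ k, k ≤ m → (path k).1 + (path k).2 = i + j + k := by
    intro k
    induction k with
    | zero => intro _; simp [hp0]
    | succ k ih =>
      intro hk
      have hk' : k < m := hk
      obtain ⟨-, hdir, -, -, -, -⟩ := hstep k hk'
      have hik := ih (Nat.le_of_lt hk')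
      rcases hdir with h | h <;> rw [h] <;> simp <;> omega
  have hrow : ∀ k, k ≤ m → i ≤ (path k).1 := by
    intro k
    induction k with
    | zero => intro _; simp [hp0]
    | succ k ih =>
      intro hk
      have hk' : k < m := hk
      obtain ⟨-, hdir, -, -, -, -⟩ := hstep k hk'
      have hik := ih (Nat.le_of_lt hk')
      rcases hdir with h | h <;> rw [h] <;> simp <;> omega
  have hcellk : ∀ k, k ≤ m → path k ∈ shCells lam r := by
    intro k
    induction k with
    | zero => intro _; rw [hp0]; exact hc
    | succ k ih =>
      intro hk
      have hk' : k < m := hk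
      exact (hstep k hk').2.2.1
  have htabC : ∀ k, k ≤ m → ∀ c, (∀ l, l ≤ k → c ≠ path l) → tab k c = T c := by
    intro k
    induction k with
    | zero => intro _ c _; rw [ht0]
    | succ k ih =>
      intro hk c hcne
      obtain ⟨-, -, -, -, -, hswap⟩ := hstep k hk
      rw [hswap]
      simp only
      rw [if_neg (hcne k (by omega)), if_neg (hcne (k + 1) le_rfl)]
      exact ih (by omega) c (fun l hl => hcne l (by omega))
  have htabA : ∀ k, k ≤ m → tab k (path k) = T (i, j) := by
    intro k
    induction k with
    | zero => intro _; rw [ht0, hp0]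
    | succ k ih =>
      intro hk
      have hk' : k < m := hk
      obtain ⟨-, -, -, -, -, hswap⟩ := hstep k hk'
      have hne : path (k + 1) ≠ path k := by
        intro he
        have h1 := hsum (k + 1) hk'
        have h2 := hsum k (by omega)
        rw [he] at h1; omega
      rw [hswap]
      simp only [if_neg hne, if_pos rfl]
      exact ih (by omega)
  have htabB : ∀ k, k ≤ m → ∀ l, l < k → tab k (path l) = T (path (l + 1)) := by
    intro k
    induction k with
    | zero => intro _ l hl; omega
    | succ k ih =>
      intro hk l hl
      have hk' : k < m := hk
      obtain ⟨-, -, -, -, -, hswap⟩ := hstep k hk'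
      have hoff : ∀ l', l' ≤ k → path (k + 1) ≠ path l' := by
        intro l' hl' he
        have h1 := hsum (k + 1) hk'
        have h2 := hsum l' (by omega)
        rw [he] at h1; omega
      rw [hswap]
      simp only
      by_cases hlk : l = k
      · subst hlk
        rw [if_pos rfl]
        exact htabC l (by omega) (path (l + 1)) hoff
      · have hne1 : path l ≠ path k := by
          intro he
          have h1 := hsum l (by omega)
          have h2 := hsum k (by omega)
          rw [he] at h1; omega
        have hne2 : path l ≠ path (k + 1) := by
          intro he
          have h1 := hsum l (by omega)
          have h2 := hsum (k + 1) hk'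
          rw [he] at h1; omega
        rw [if_neg hne1, if_neg hne2]
        exact ih (by omega) l (by omega)
  have hrlt : ∀ k, 1 ≤ k → k ≤ m → rowLT (path k) (i, j) := by
    intro k h1 h2
    have ha := hrow k h2
    have hb := hsum k h2
    have : i < (path k).1 ∨ ((path k).1 = i ∧ j < (path k).2) := by omega
    exact this
  have hord_consec : ∀ k, 1 ≤ k → k + 1 ≤ m → T (path k) < T (path (k + 1)) := by
    intro k h1 h2
    obtain ⟨-, hdir, -, -, -, -⟩ := hstep k h2
    refine hord (path k) (hcellk k (by omega)) (path (k + 1)) (hcellk (k + 1) h2)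
      (hrlt k h1 (by omega)) (hrlt (k + 1) (by omega) h2) ?_
    rcases hdir with h | h
    · exact Or.inr ⟨by rw [h], by rw [h]⟩
    · exact Or.inl ⟨by rw [h], by rw [h]⟩
  have hlast : 0 < m → T (path m) < T (i, j) := by
    intro hm
    have h := hstep (m - 1) (by omega)
    have hm1 : m - 1 + 1 = m := by omega
    rw [hm1] at h
    obtain ⟨-, -, -, hlt, -, -⟩ := h
    have e1 : tab (m - 1) (path (m - 1)) = T (i, j) := htabA (m - 1) (by omega)
    have e2 : tab (m - 1) (path m) = T (path m) := by
      refine htabC (m - 1) (by omega) _ (fun l hl he => ?_)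
      have h1 := hsum m le_rfl
      have h2 := hsum l (by omega)
      rw [he] at h1; omega
    rw [e1, e2] at hlt
    exact hlt
  have hc'm : c' = path m := by
    by_cases hcp : ∃ l, l ≤ m ∧ c' = path l
    · obtain ⟨l, hlm, rfl⟩ := hcp
      by_cases hl : l = m
      · rw [hl]
      · exfalso
        have h1 : tab m (path l) = T (path (l + 1)) := htabB m le_rfl l (by omega)
        rw [htm, hval] at h1
        have h2 := hinj2 (i, j) hc (path (l + 1)) (hcellk (l + 1) (by omega)) h1
        have hs := hsum (l + 1) (by omega)
        rw [← h2] at hs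
        simp at hs
    · exfalso
      push_neg at hcp
      have h1 : tab m c' = T c' := htabC m le_rfl c' hcp
      rw [htm, hval] at h1
      have h2 := hinj2 c' hc' (i, j) hc h1.symm
      exact hcp 0 (by omega) (by rw [h2, hp0])
  constructor
  · -- U is ordered up to (i, j)
    intro p hp q hq hpR hqR hadj
    rw [← htm]
    by_cases hpP : ∃ l, l ≤ m ∧ p = path l
    · obtain ⟨l, hlm, rfl⟩ := hpP
      by_cases hqP : ∃ l', l' ≤ m ∧ q = path l'
      · obtain ⟨l', hl'm, rfl⟩ := hqP
        have hsl := hsum l hlm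
        have hsl' := hsum l' hl'm
        have hll' : l' = l + 1 := by
          rcases hadj with ⟨h1, h2⟩ | ⟨h1, h2⟩ <;> omega
        subst hll'
        rw [htabB m le_rfl l (by omega)]
        by_cases hlm' : l + 1 = m
        · rw [hlm', htabA m le_rfl]
          exact hlast (by omega)
        · rw [htabB m le_rfl (l + 1) (by omega)]
          exact hord_consec (l + 1) (by omega) (by omega)
      · push_neg at hqP
        rw [htabC m le_rfl q hqP]
        by_cases hlm' : l = m
        · subst hlm'
          rw [htabA l le_rfl]
          rcases hfin with hbad | hmin'
          · simp at hbad
          · have hσ : q = ((path l).1 + 1, (path l).2) ∨ q = ((path l).1, (path l).2 + 1) := by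
              rcases hadj with ⟨h1, h2⟩ | ⟨h1, h2⟩
              · exact Or.inr (Prod.ext_iff.mpr ⟨h1, h2⟩)
              · exact Or.inl (Prod.ext_iff.mpr ⟨h1, h2⟩)
            have hle := hmin' q hq hσ
            rw [htabA l le_rfl] at hle
            have e2 : tab l q = T q := htabC l le_rfl q hqP
            rw [e2] at hle
            refine lt_of_le_of_ne hle (fun he => ?_)
            have h2 := hinj2 (i, j) hc q hq he
            exact hqP 0 (by omega) (by rw [← h2, hp0])
        · rw [htabB m le_rfl l (by omega)]
          obtain ⟨-, -, -, -, hmin', -⟩ := hstep l (by omega)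
          have hσ : q = ((path l).1 + 1, (path l).2) ∨ q = ((path l).1, (path l).2 + 1) := by
            rcases hadj with ⟨h1, h2⟩ | ⟨h1, h2⟩
            · exact Or.inr (Prod.ext_iff.mpr ⟨h1, h2⟩)
            · exact Or.inl (Prod.ext_iff.mpr ⟨h1, h2⟩)
          have hle := hmin' q hq hσ
          have e1 : tab l (path (l + 1)) = T (path (l + 1)) := by
            refine htabC l (by omega) _ (fun l'' hl'' he => ?_)
            have h1 := hsum (l + 1) (by omega)
            have h2 := hsum l'' (by omega)
            rw [he] at h1; omega
          have e2 : tab l q = T q := htabC l (by omega) q (fun l'' hl'' => hqP l'' (by omega))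
          rw [e1, e2] at hle
          refine lt_of_le_of_ne hle (fun he => ?_)
          have h2 := hinj2 (path (l + 1)) (hcellk (l + 1) (by omega)) q hq he
          exact hqP (l + 1) (by omega) h2.symm
    · push_neg at hpP
      rw [htabC m le_rfl p hpP]
      have hpRlt : rowLT p (i, j) := by
        rcases hpR with rfl | h
        · exact absurd hp0.symm (hpP 0 (Nat.zero_le m))
        · exact h
      by_cases hqP : ∃ l', l' ≤ m ∧ q = path l'
      · obtain ⟨l', hl'm, rfl⟩ := hqP
        have hl'1 : 1 ≤ l' := by
          by_contra hl'0
          have hl'0' : l' = 0 := by omega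
          subst hl'0'
          rw [hp0] at hadj
          rcases hpRlt with h | ⟨h1, h2⟩ <;> rcases hadj with ⟨ha1, ha2⟩ | ⟨ha1, ha2⟩ <;>
            simp at ha1 ha2 <;> omega
        have h1 : T p < T (path l') :=
          hord p hp (path l') hq hpRlt (hrlt l' hl'1 hl'm) hadj
        by_cases hl'm' : l' = m
        · subst hl'm'
          rw [htabA l' le_rfl]
          exact h1.trans (hlast (by omega))
        · rw [htabB m le_rfl l' (by omega)]
          exact h1.trans (hord_consec l' hl'1 (by omega))
      · push_neg at hqP
        rw [htabC m le_rfl q hqP]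
        have hqRlt : rowLT q (i, j) := by
          rcases hqR with rfl | h
          · exact absurd hp0.symm (hqP 0 (Nat.zero_le m))
          · exact h
        exact hord p hp q hq hpRlt hqRlt hadj
  · -- reverse jeu de taquin recovers T
    refine ⟨m, fun k => path (m - k), fun k => tab (m - k), ?_, ?_, ?_, ?_, ?_⟩
    · simp only [Nat.sub_zero]
      exact hc'm.symm
    · simp only [Nat.sub_zero]
      exact htm
    · simp only [Nat.sub_self]
      exact ht0
    · intro k hk
      simp only
      obtain ⟨l, hl1, hl2⟩ : ∃ l, m - k = l + 1 ∧ m - (k + 1) = l := ⟨m - (k + 1), by omega, rfl⟩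
      rw [hl1, hl2]
      have hlm : l < m := by omega
      have hl1m : l + 1 ≤ m := hlm
      obtain ⟨-, hdir, hcellk1, hlt, -, hswap⟩ := hstep l hlm
      have hs1 := hsum (l + 1) hl1m
      have hrw := hrow (l + 1) hl1m
      have hrwl := hrow l (by omega)
      have hcl1 := hcellP (path (l + 1)) (hcellk (l + 1) hl1m)
      refine ⟨?_, ?_, ?_, ?_, ?_, ?_, ?_⟩
      · -- path (l+1) ≠ (i, i)
        intro he
        rw [he] at hs1
        simp at hs1
        omega
      · -- path (l+1) ∉ {(i, j)}
        simp only [Finset.mem_singleton]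
        intro he
        rw [he] at hs1
        simp at hs1
      · -- fixed row i : move left
        intro hri
        rcases hdir with h | h
        · exfalso
          have : (path (l + 1)).1 = (path l).1 + 1 := by rw [h]
          omega
        · have h1 : (path l).1 = (path (l + 1)).1 := by rw [h]
          have h2 : (path l).2 = (path (l + 1)).2 - 1 := by rw [h]; simp
          exact Prod.ext_iff.mpr ⟨h1, h2⟩
      · -- diagonal : move up
        intro hri hdiag
        rcases hdir with h | h
        · have h1 : (path l).1 = (path (l + 1)).1 - 1 := by rw [h]; simp
          have h2 : (path l).2 = (path (l + 1)).2 := by rw [h]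
          exact Prod.ext_iff.mpr ⟨h1, h2⟩
        · exfalso
          have h1 : (path (l + 1)).1 = (path l).1 := by rw [h]
          have h2 : (path (l + 1)).2 = (path l).2 + 1 := by rw [h]
          have h3 := (hcellP (path l) (hcellk l (by omega))).2
          omega
      · -- generic : move up or left, maximality
        intro hri hdiag
        constructor
        · rcases hdir with h | h
          · refine Or.inl (Prod.ext_iff.mpr ⟨?_, ?_⟩)
            · rw [h]; simp
            · rw [h]
          · refine Or.inr (Prod.ext_iff.mpr ⟨?_, ?_⟩)
            · rw [h]
            · rw [h]; simp
        · intro σ hσm hσor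
          by_cases hσl : σ = path l
          · subst hσl
            exact le_refl _
          · have hσsum : σ.1 + σ.2 + 1 = (path (l + 1)).1 + (path (l + 1)).2 := by
              rcases hσor with h | h <;> rw [h] <;> simp <;> omega
            have hσoff : ∀ l'', l'' ≤ l + 1 → σ ≠ path l'' := by
              intro l'' h'' he
              have h2 := hsum l'' (by omega)
              rw [he] at hσsum
              have : l'' = l := by omega
              exact hσl (by rw [he, this])
            have hTσ : tab (l + 1) σ = T σ := htabC (l + 1) hl1m σ hσoff
            have hTpl : tab (l + 1) (path l) = T (path (l + 1)) := htabB (l + 1) hl1m l (by omega)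
            rw [hTσ, hTpl]
            have hσrlt : rowLT σ (i, j) := by
              have hσne0 : σ ≠ (i, j) := by
                intro he
                exact hσoff 0 (by omega) (by rw [he, hp0])
              rcases hσor with h | h
              · -- σ = up neighbour (a-1, b)
                have hσ1 : σ.1 = (path (l + 1)).1 - 1 := by rw [h]
                have hσ2 : σ.2 = (path (l + 1)).2 := by rw [h]
                have hne2 : ¬(σ.1 = i ∧ σ.2 = j) := by
                  intro ⟨ha, hb⟩
                  exact hσne0 (Prod.ext_iff.mpr ⟨ha, hb⟩)
                have : i < σ.1 ∨ (σ.1 = i ∧ j < σ.2) := by omega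
                exact this
              · -- σ = left neighbour (a, b-1)
                have hσ1 : σ.1 = (path (l + 1)).1 := by rw [h]
                have : i < σ.1 ∨ (σ.1 = i ∧ j < σ.2) := by omega
                exact this
            refine le_of_lt (hord σ hσm (path (l + 1)) (hcellk (l + 1) hl1m) hσrlt
              (hrlt (l + 1) (by omega) hl1m) ?_)
            rcases hσor with h | h
            · refine Or.inr ⟨?_, ?_⟩
              · rw [h]; simp; omega
              · rw [h]
            · refine Or.inl ⟨?_, ?_⟩
              · rw [h]
              · rw [h]; simp; omega
      · -- next cell is a cell
        exact hcellk l (by omega)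
      · -- swap description
        have hnepl : path l ≠ path (l + 1) := by
          intro he
          have h1 := hsum l (by omega)
          rw [he] at h1
          omega
        have hsw : ∀ c, tab (l + 1) c =
            if c = path l then tab l (path (l + 1))
            else if c = path (l + 1) then tab l (path l) else tab l c := fun c => by
          rw [hswap]
        funext c
        by_cases h1 : c = path (l + 1)
        · subst h1
          rw [if_pos rfl, hsw (path l), if_pos rfl]
        · rw [if_neg h1]
          by_cases h2 : c = path l
          · subst h2
            rw [if_pos rfl, hsw (path (l + 1)), if_neg (Ne.symm hnepl), if_pos rfl]
          · rw [if_neg h2, hsw c, if_neg h2, if_neg h1]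
    · right
      simp only [Nat.sub_self]
      rw [hp0]
      exact Finset.mem_singleton_self _
end
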